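/- Let G be a locally compact Hausdorff topological group, let C be a nonempty subset of G, let E be a complex Banach space such that E or its continuous dual E* is smooth, let π be a representation of G on E (a group homomorphism from G into the invertible linear isometries of E such that g ↦ π(g)ξ is continuous for every ξ ∈ E), and let ξ ∈ E and η ∈ E* satisfy ‖ξ‖·‖η‖ = 1 and η(π(g)ξ) = χ_C(g) for all g ∈ G, where χ_C is the indicator function of C. Then C is a left coset of an open subgroup of G. -/

import Mathlib

open Pointwise

/-- A complex normed space `F` is *smooth* if every nonzero `ξ ∈ F` admits a unique
norming functional: a continuous linear functional `η` with `‖η‖ = 1` and `η ξ = ‖ξ‖`. -/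
def IsSmoothNormedSpace (F : Type*) [NormedAddCommGroup F] [NormedSpace ℂ F] : Prop :=
  ∀ ξ : F, ξ ≠ 0 → ∃! η : F →L[ℂ] ℂ, ‖η‖ = 1 ∧ η ξ = (‖ξ‖ : ℂ)

section Aux

variable {G : Type*} [Group G] [TopologicalSpace G] [IsTopologicalGroup G]
  {E : Type*} [NormedAddCommGroup E] [NormedSpace ℂ E]

/-- Composition of a functional with a linear isometric equivalence preserves the norm. -/
lemma norm_comp_isometryEquiv (η : E →L[ℂ] ℂ) (T : E ≃ₗᵢ[ℂ] E) :
    ‖η.comp (T.toContinuousLinearEquiv : E →L[ℂ] E)‖ = ‖η‖ := by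
  apply le_antisymm
  · apply ContinuousLinearMap.opNorm_le_bound _ (norm_nonneg η)
    intro v
    calc ‖η (T v)‖ ≤ ‖η‖ * ‖T v‖ := η.le_opNorm _
    _ = ‖η‖ * ‖v‖ := by rw [T.norm_map]
  · apply ContinuousLinearMap.opNorm_le_bound _ (norm_nonneg _)
    intro v
    have hv : η v = (η.comp (T.toContinuousLinearEquiv : E →L[ℂ] E)) (T.symm v) := by
      simp
    rw [hv]
    calc ‖(η.comp (T.toContinuousLinearEquiv : E →L[ℂ] E)) (T.symm v)‖
        ≤ ‖η.comp (T.toContinuousLinearEquiv : E →L[ℂ] E)‖ * ‖T.symm v‖ :=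
          ContinuousLinearMap.le_opNorm _ _
    _ = ‖η.comp (T.toContinuousLinearEquiv : E →L[ℂ] E)‖ * ‖v‖ := by rw [T.symm.norm_map]

lemma aux_subgroup (C : Set G)
    (hsmooth : IsSmoothNormedSpace E ∨ IsSmoothNormedSpace (E →L[ℂ] ℂ))
    (π : G →* (E ≃ₗᵢ[ℂ] E))
    (hπcont : ∀ v : E, Continuous fun g : G => π g v)
    (ξ : E) (η : E →L[ℂ] ℂ)
    (hnorm : ‖ξ‖ * ‖η‖ = 1)
    (hcoeff : ∀ g : G, η (π g ξ) = Set.indicator C (fun _ => (1 : ℂ)) g)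
    (h1 : (1 : G) ∈ C) :
    ∃ G₀ : Subgroup G, IsOpen (G₀ : Set G) ∧ C = (G₀ : Set G) := by
  have hξn : ‖ξ‖ ≠ 0 := by
    intro h; rw [h, zero_mul] at hnorm; exact one_ne_zero hnorm.symm
  have hηn : ‖η‖ ≠ 0 := by
    intro h; rw [h, mul_zero] at hnorm; exact one_ne_zero hnorm.symm
  have hξ : ξ ≠ 0 := fun h => hξn (by rw [h, norm_zero])
  have hη : η ≠ 0 := fun h => hηn (by rw [h, norm_zero])
  have hmulπ : ∀ (g h : G) (v : E), π g (π h v) = π (g * h) v := by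
    intro g h v
    rw [map_mul]
    rfl
  -- membership criterion
  have hmem : ∀ g : G, g ∈ C ↔ η (π g ξ) = 1 := by
    intro g
    constructor
    · intro hg; rw [hcoeff, Set.indicator_of_mem hg]
    · intro hg
      by_contra hgc
      rw [hcoeff, Set.indicator_of_notMem hgc] at hg
      exact one_ne_zero hg.symm
  -- openness
  have hopen : IsOpen C := by
    have hCeq : C = (fun g : G => η (π g ξ)) ⁻¹' Metric.ball (1 : ℂ) (1/2) := by
      ext g
      simp only [Set.mem_preimage, Metric.mem_ball]
      constructor
      · intro hg
        rw [(hmem g).1 hg]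
        simp
      · intro hg
        by_contra hgc
        rw [hcoeff, Set.indicator_of_notMem hgc] at hg
        rw [dist_eq_norm] at hg
        norm_num at hg
    rw [hCeq]
    exact (Metric.isOpen_ball).preimage (η.continuous.comp (hπcont ξ))
  -- the key invariance property, from smoothness
  have hkey : (∀ g ∈ C, ∀ h : G, η (π (g * h) ξ) = η (π h ξ)) ∨
      (∀ h ∈ C, ∀ g : G, η (π (g * h) ξ) = η (π g ξ)) := by
    rcases hsmooth with hs | hs
    · left
      obtain ⟨η₀, _, huniq⟩ := hs ξ hξ
      -- the family of twisted functionals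
      set P : G → (E →L[ℂ] ℂ) := fun g =>
        (‖ξ‖ : ℂ) • (η.comp ((π g).toContinuousLinearEquiv : E →L[ℂ] E)) with hP
      have hPapply : ∀ (g : G) (v : E), P g v = (‖ξ‖ : ℂ) * η (π g v) := by
        intro g v; simp [hP]
      have hPnorm : ∀ g : G, ‖P g‖ = 1 := by
        intro g
        have hcn : ‖((‖ξ‖ : ℝ) : ℂ)‖ = ‖ξ‖ := by
          rw [Complex.norm_real, Real.norm_eq_abs, abs_of_nonneg (norm_nonneg ξ)]
        have hsm := norm_smul ((‖ξ‖ : ℝ) : ℂ)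
          (η.comp ((π g).toContinuousLinearEquiv : E →L[ℂ] E))
        rw [hP]; beta_reduce
        rw [hsm, hcn, norm_comp_isometryEquiv η (π g), hnorm]
      have hPsat : ∀ g ∈ C, ‖P g‖ = 1 ∧ P g ξ = (‖ξ‖ : ℂ) := by
        intro g hg
        refine ⟨hPnorm g, ?_⟩
        rw [hPapply, (hmem g).1 hg, mul_one]
      intro g hg h
      have h1' : P 1 = η₀ := huniq _ (hPsat 1 h1)
      have hg' : P g = η₀ := huniq _ (hPsat g hg)
      have := congrArg (fun T : E →L[ℂ] ℂ => T (π h ξ)) (hg'.trans h1'.symm)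
      simp only [hPapply] at this
      rw [hmulπ g h ξ] at this
      have hone : π (1 : G) (π h ξ) = π h ξ := by rw [map_one]; rfl
      rw [hone] at this
      exact mul_left_cancel₀ (by exact_mod_cast hξn) this
    · right
      obtain ⟨Φ₀, _, huniq⟩ := hs η hη
      set Q : G → ((E →L[ℂ] ℂ) →L[ℂ] ℂ) := fun g =>
        (‖η‖ : ℂ) • (NormedSpace.inclusionInDoubleDual ℂ E (π g ξ)) with hQ
      have hQapply : ∀ (g : G) (ψ : E →L[ℂ] ℂ), Q g ψ = (‖η‖ : ℂ) * ψ (π g ξ) := by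
        intro g ψ; simp [hQ]
      have hQnorm : ∀ g : G, ‖Q g‖ = 1 := by
        intro g
        have hcn : ‖((‖η‖ : ℝ) : ℂ)‖ = ‖η‖ := by
          rw [Complex.norm_real, Real.norm_eq_abs, abs_of_nonneg (norm_nonneg η)]
        have hdd : ‖NormedSpace.inclusionInDoubleDual ℂ E (π g ξ)‖ = ‖π g ξ‖ :=
          (NormedSpace.inclusionInDoubleDualLi ℂ).norm_map (π g ξ)
        have hsm := (NormedSpace.toNormSMulClass (𝕜 := ℂ)
          (E := (E →L[ℂ] ℂ) →L[ℂ] ℂ)).norm_smul ((‖η‖ : ℝ) : ℂ)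
          (NormedSpace.inclusionInDoubleDual ℂ E (π g ξ))
        rw [hQ]; beta_reduce
        rw [hsm, hcn, hdd, (π g).norm_map, mul_comm, hnorm]
      have hQsat : ∀ g ∈ C, ‖Q g‖ = 1 ∧ Q g η = (‖η‖ : ℂ) := by
        intro g hg
        refine ⟨hQnorm g, ?_⟩
        rw [hQapply, (hmem g).1 hg, mul_one]
      intro h hh g
      have h1' : Q 1 = Φ₀ := huniq _ (hQsat 1 h1)
      have hh' : Q h = Φ₀ := huniq _ (hQsat h hh)
      -- all functionals agree on π h ξ and ξ, so they are equal
      have hfix : π h ξ = ξ := by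
        rw [NormedSpace.eq_iff_forall_dual_eq ℂ]
        intro ψ
        have := congrArg (fun T : (E →L[ℂ] ℂ) →L[ℂ] ℂ => T ψ) (hh'.trans h1'.symm)
        simp only [hQapply] at this
        have hone : π (1 : G) ξ = ξ := by rw [map_one]; rfl
        rw [hone] at this
        exact mul_left_cancel₀ (by exact_mod_cast hηn) this
      rw [← hmulπ g h ξ, hfix]
  -- closure properties
  have hmul : ∀ g ∈ C, ∀ h ∈ C, g * h ∈ C := by
    intro g hg h hh
    rcases hkey with hk | hk
    · rw [hmem, hk g hg h, ← hmem]; exact hh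
    · rw [hmem, hk h hh g, ← hmem]; exact hg
  have hinv : ∀ g ∈ C, g⁻¹ ∈ C := by
    intro g hg
    rcases hkey with hk | hk
    · have hthis := hk g hg g⁻¹
      rw [mul_inv_cancel] at hthis
      rw [hmem, ← hthis]
      exact (hmem 1).1 h1
    · have hthis := hk g hg g⁻¹
      rw [inv_mul_cancel] at hthis
      rw [hmem, ← hthis]
      exact (hmem 1).1 h1
  refine ⟨⟨⟨⟨C, ?_⟩, ?_⟩, ?_⟩, hopen, rfl⟩
  · intro a b ha hb
    exact hmul a ha b hb
  · exact h1
  · intro a ha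
    exact hinv a ha

end Aux

/-- Let `G` be a locally compact Hausdorff topological group, `C` a
nonempty subset of `G`, `E` a complex Banach space such that `E` or its dual `E*` is
smooth, `π` a strongly continuous representation of `G` by invertible linear isometries
of `E`, and `ξ ∈ E`, `η ∈ E*` with `‖ξ‖ ⬝ ‖η‖ = 1` and `η (π g ξ) = χ_C g` for all `g`.
Then `C` is a left coset of an open subgroup of `G`. -/
theorem coset_of_normalized_indicator_coefficient
    {G : Type*} [Group G] [TopologicalSpace G] [IsTopologicalGroup G]
    [LocallyCompactSpace G] [T2Space G]
    (C : Set G) (hC : C.Nonempty)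
    {E : Type*} [NormedAddCommGroup E] [NormedSpace ℂ E] [CompleteSpace E]
    (hsmooth : IsSmoothNormedSpace E ∨ IsSmoothNormedSpace (E →L[ℂ] ℂ))
    (π : G →* (E ≃ₗᵢ[ℂ] E))
    (hπcont : ∀ v : E, Continuous fun g : G => π g v)
    (ξ : E) (η : E →L[ℂ] ℂ)
    (hnorm : ‖ξ‖ * ‖η‖ = 1)
    (hcoeff : ∀ g : G, η (π g ξ) = Set.indicator C (fun _ => (1 : ℂ)) g) :
    ∃ (G₀ : Subgroup G) (x : G), IsOpen (G₀ : Set G) ∧ C = x • (G₀ : Set G) := by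
  obtain ⟨x, hx⟩ := hC
  -- twist the functional by `π x` to reduce to the case `1 ∈ C`
  set C' : Set G := (fun g => x * g) ⁻¹' C with hC'
  set η' : E →L[ℂ] ℂ := η.comp ((π x).toContinuousLinearEquiv : E →L[ℂ] E) with hη'
  have hnorm' : ‖ξ‖ * ‖η'‖ = 1 := by
    rw [hη', norm_comp_isometryEquiv]; exact hnorm
  have hcoeff' : ∀ g : G, η' (π g ξ) = Set.indicator C' (fun _ => (1 : ℂ)) g := by
    intro g
    have : η' (π g ξ) = η (π (x * g) ξ) := by
      rw [hη']
      simp only [ContinuousLinearMap.comp_apply]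
      congr 1
      rw [map_mul]
      rfl
    rw [this, hcoeff]
    by_cases hgC : x * g ∈ C
    · rw [Set.indicator_of_mem hgC, Set.indicator_of_mem (by simpa [hC'] using hgC)]
    · rw [Set.indicator_of_notMem hgC,
        Set.indicator_of_notMem (by simpa [hC'] using hgC)]
  have h1' : (1 : G) ∈ C' := by simp [hC', hx]
  obtain ⟨G₀, hGopen, hGeq⟩ :=
    aux_subgroup C' hsmooth π hπcont ξ η' hnorm' hcoeff' h1'
  refine ⟨G₀, x, hGopen, ?_⟩
  rw [← hGeq]
  ext g
  rw [Set.mem_smul_set_iff_inv_smul_mem]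
  simp [hC', smul_eq_mul, mul_inv_cancel_left]
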